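/- Let X = x∂_x and Y = Φ_v^{λ₁,λ₂} = (v²−1)∂²_v + (λ₁−λ₂+(λ₁+λ₂)v)∂_v, regarded (after the change of variables t = x+y, v = (y−x)/(x+y)) as operators on polynomials in x, y. Restricted to homogeneous polynomials of degree N, they satisfy the Hahn algebra relations: [X,Y] = Z, [X,Z] = 2X² + (λ₁−λ₂−2N)X + Y − λ₁N, and [Y,Z] = −2{X,Y} − (λ₁+λ₂)(λ₁+λ₂−2)X − (λ₁−λ₂−2N)Y + λ₁(λ₁+λ₂−2)N. -/

import Mathlib

open Finset MvPolynomial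

-- swap lemma
lemma pdswap (q : MvPolynomial (Fin 2) ℂ) :
    pderiv 0 (pderiv 1 q) = pderiv 1 (pderiv 0 q) := by
  induction q using MvPolynomial.induction_on with
  | C c => simp
  | add p q hp hq => simp [hp, hq]
  | mul_X q s hq =>
    have e : ∀ t : Fin 2, pderiv t (X s : MvPolynomial (Fin 2) ℂ) = if t = s then 1 else 0 := by
      intro t; by_cases h : t = s
      · simp [h]
      · simp [pderiv_X_of_ne (Ne.symm h), h]
    simp only [pderiv_mul, map_add, e, hq]
    split_ifs <;> simp <;> ring

lemma pd01 : pderiv (0 : Fin 2) (X 1 : MvPolynomial (Fin 2) ℂ) = 0 := pderiv_X_of_ne (by decide)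
lemma pd10 : pderiv (1 : Fin 2) (X 0 : MvPolynomial (Fin 2) ℂ) = 0 := pderiv_X_of_ne (by decide)
lemma pd2 (i : Fin 2) : pderiv i (2 : MvPolynomial (Fin 2) ℂ) = 0 := by
  rw [show ((2:MvPolynomial (Fin 2) ℂ)) = C 2 from (map_ofNat C 2).symm, pderiv_C]

lemma X_mul_pderiv_monomial (i : Fin 2) (d : Fin 2 →₀ ℕ) (c : ℂ) :
    X i * pderiv i (monomial d c) = monomial d (c * (d i : ℂ)) := by
  rw [pderiv_monomial]
  by_cases h : d i = 0
  · simp [h]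
  · rw [X, monomial_mul, one_mul, add_tsub_cancel_of_le]
    exact Finsupp.single_le_iff.mpr (Nat.one_le_iff_ne_zero.mpr h)

lemma euler_base {p : MvPolynomial (Fin 2) ℂ} {N : ℕ} (hp : p.IsHomogeneous N) :
    X 0 * pderiv 0 p + X 1 * pderiv 1 p = C (N : ℂ) * p := by
  conv_lhs => rw [p.as_sum]
  conv_rhs => rw [p.as_sum]
  rw [map_sum (pderiv 0), map_sum (pderiv 1), Finset.mul_sum, Finset.mul_sum, Finset.mul_sum,
    ← Finset.sum_add_distrib]
  refine Finset.sum_congr rfl fun d hd => ?_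
  rw [X_mul_pderiv_monomial, X_mul_pderiv_monomial, ← map_add, C_mul_monomial]
  congr 1
  have hdeg : d.degree = N := by
    rw [Finsupp.degree_eq_weight_one]
    exact hp (mem_support_iff.mp hd)
  have h2 : d 0 + d 1 = N := by
    rw [← hdeg]
    rw [Finsupp.degree_apply]
    rw [Finset.sum_subset (Finset.subset_univ _)
      (fun i _ hi => Finsupp.notMem_support_iff.mp hi), Fin.sum_univ_two]
  have : ((d 0 : ℂ)) + (d 1 : ℂ) = (N : ℂ) := by exact_mod_cast congrArg (Nat.cast (R := ℂ)) h2
  linear_combination (coeff d p) * this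

lemma euler_step0 {q : MvPolynomial (Fin 2) ℂ} {m : ℂ}
    (h : X 0 * pderiv 0 q + X 1 * pderiv 1 q = C m * q) :
    X 0 * pderiv 0 (pderiv 0 q) + X 1 * pderiv 1 (pderiv 0 q) = C (m - 1) * pderiv 0 q := by
  have h' := congrArg (pderiv 0) h
  simp only [map_add, pderiv_mul, pderiv_C_mul, pderiv_X_self, pderiv_C, pd01, pdswap] at h'
  rw [map_sub, map_one]
  linear_combination h'

lemma euler_step1 {q : MvPolynomial (Fin 2) ℂ} {m : ℂ}
    (h : X 0 * pderiv 0 q + X 1 * pderiv 1 q = C m * q) :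
    X 0 * pderiv 0 (pderiv 1 q) + X 1 * pderiv 1 (pderiv 1 q) = C (m - 1) * pderiv 1 q := by
  have h' := congrArg (pderiv 1) h
  simp only [map_add, pderiv_mul, pderiv_C_mul, pderiv_X_self, pderiv_C, pd10] at h'
  rw [map_sub, map_one, pdswap]
  linear_combination h'

/-- Action of `H = λ₁+λ₂+2x∂ₓ+2y∂_y` on `ℂ[x,y]` (tensor of two lowest-weight
Verma modules with weights `a`, `b`). -/
noncomputable def Hop (a b : ℂ) (p : MvPolynomial (Fin 2) ℂ) : MvPolynomial (Fin 2) ℂ :=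
  C (a + b) * p + 2 * (X 0 * pderiv 0 p + X 1 * pderiv 1 p)

/-- Action of `E = x + y` on `ℂ[x,y]`. -/
noncomputable def Eop (p : MvPolynomial (Fin 2) ℂ) : MvPolynomial (Fin 2) ℂ :=
  (X 0 + X 1) * p

/-- Action of `F = -x∂ₓ² - y∂_y² - λ₁∂ₓ - λ₂∂_y` on `ℂ[x,y]`. -/
noncomputable def Fop (a b : ℂ) (p : MvPolynomial (Fin 2) ℂ) : MvPolynomial (Fin 2) ℂ :=
  -(X 0 * pderiv 0 (pderiv 0 p)) - X 1 * pderiv 1 (pderiv 1 p)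
    - C a * pderiv 0 p - C b * pderiv 1 p

/-- Action of the diagonal Casimir `δ(C) = (H²+2H)/4 + FE` on `ℂ[x,y]`. -/
noncomputable def CasOp (a b : ℂ) (p : MvPolynomial (Fin 2) ℂ) : MvPolynomial (Fin 2) ℂ :=
  C ((4 : ℂ)⁻¹) * (Hop a b (Hop a b p) + 2 * Hop a b p) + Fop a b (Eop p)

/-- `X = x∂ₓ` on `ℂ[x,y]`. -/
noncomputable def XHahn (p : MvPolynomial (Fin 2) ℂ) : MvPolynomial (Fin 2) ℂ :=
  X 0 * pderiv 0 p

/-- `Y = δ(C) - (λ₁+λ₂)(λ₁+λ₂-2)/4`, which acts as the Jacobi operator `Φ_v^{λ₁,λ₂}`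
after the change of variables `t = x+y`, `v = (y-x)/(x+y)`. -/
noncomputable def YHahn (a b : ℂ) (p : MvPolynomial (Fin 2) ℂ) : MvPolynomial (Fin 2) ℂ :=
  CasOp a b p - C ((a + b) * (a + b - 2) / 4) * p

/-- `Z = [X,Y]`. -/
noncomputable def ZHahn (a b : ℂ) (p : MvPolynomial (Fin 2) ℂ) : MvPolynomial (Fin 2) ℂ :=
  XHahn (YHahn a b p) - YHahn a b (XHahn p)


lemma eul_add {q r : MvPolynomial (Fin 2) ℂ} {m : ℂ}
    (hq : X 0 * pderiv 0 q + X 1 * pderiv 1 q = C m * q)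
    (hr : X 0 * pderiv 0 r + X 1 * pderiv 1 r = C m * r) :
    X 0 * pderiv 0 (q + r) + X 1 * pderiv 1 (q + r) = C m * (q + r) := by
  simp only [map_add]; linear_combination hq + hr

lemma eul_sub {q r : MvPolynomial (Fin 2) ℂ} {m : ℂ}
    (hq : X 0 * pderiv 0 q + X 1 * pderiv 1 q = C m * q)
    (hr : X 0 * pderiv 0 r + X 1 * pderiv 1 r = C m * r) :
    X 0 * pderiv 0 (q - r) + X 1 * pderiv 1 (q - r) = C m * (q - r) := by
  simp only [map_sub]; linear_combination hq - hr

lemma eul_Cmul {q : MvPolynomial (Fin 2) ℂ} {m c : ℂ}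
    (hq : X 0 * pderiv 0 q + X 1 * pderiv 1 q = C m * q) :
    X 0 * pderiv 0 (C c * q) + X 1 * pderiv 1 (C c * q) = C m * (C c * q) := by
  simp only [pderiv_C_mul]; linear_combination C c * hq

lemma eul_XHahn {q : MvPolynomial (Fin 2) ℂ} {m : ℂ}
    (h : X 0 * pderiv 0 q + X 1 * pderiv 1 q = C m * q) :
    X 0 * pderiv 0 (XHahn q) + X 1 * pderiv 1 (XHahn q) = C m * XHahn q := by
  have h10 := euler_step0 h
  simp only [map_sub, map_one] at h10
  simp only [XHahn, pderiv_mul, pderiv_X_self, pd10]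
  linear_combination X 0 * h10

lemma eul_FE (a b : ℂ) {q : MvPolynomial (Fin 2) ℂ} {m : ℂ}
    (h00 : X 0 * pderiv 0 q + X 1 * pderiv 1 q = C m * q) :
    X 0 * pderiv 0 (Fop a b (Eop q)) + X 1 * pderiv 1 (Fop a b (Eop q))
      = C m * Fop a b (Eop q) := by
  have h10 := euler_step0 h00
  have h01 := euler_step1 h00
  have h20 := euler_step0 h10
  have h11 := euler_step1 h10
  have h02 := euler_step1 h01
  simp only [pdswap] at h01 h11 h02
  simp only [map_sub, map_one] at h10 h01 h20 h11 h02
  simp only [Fop, Eop, map_add, map_sub, map_neg, pderiv_mul, pderiv_C_mul, pderiv_C,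
    pderiv_X_self, pderiv_one, map_zero, pd01, pd10, pdswap]
  linear_combination (- (C b) - (C a)) * h00 + (- 2*(X 1) - (X 1)*(C b) - (X 0)*(C b)) * h01 + (- (X 1)^2 - (X 0)*(X 1)) * h02 + (- (X 1)*(C a) - 2*(X 0) - (X 0)*(C a)) * h10 + (- (X 0)*(X 1) - (X 0)^2) * h20

lemma Yval (a b : ℂ) {q : MvPolynomial (Fin 2) ℂ} {m : ℂ}
    (h00 : X 0 * pderiv 0 q + X 1 * pderiv 1 q = C m * q) :
    YHahn a b q = C ((m + 1) * (a + b + m)) * q + Fop a b (Eop q) := by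
  have hk : (4 : MvPolynomial (Fin 2) ℂ) * C ((4:ℂ)⁻¹) = 1 := by
    rw [show ((4:MvPolynomial (Fin 2) ℂ)) = C 4 from (map_ofNat C 4).symm, ← map_mul]
    norm_num
  have h10 := euler_step0 h00
  have h01 := euler_step1 h00
  simp only [pdswap] at h01
  simp only [map_sub, map_one] at h10 h01
  simp only [YHahn, CasOp, Hop, map_add, map_sub, map_neg, pderiv_mul, pderiv_C_mul, pderiv_C,
    pd2, pderiv_X_self, pderiv_one, map_zero, pd01, pd10, pdswap, div_eq_mul_inv, map_mul, map_ofNat, map_one]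
  linear_combination (4*(C ((4:ℂ)⁻¹)) + 4*(C m)*(C ((4:ℂ)⁻¹)) + 4*(C b)*(C ((4:ℂ)⁻¹)) + 4*(C a)*(C ((4:ℂ)⁻¹))) * h00 + (4*(X 1)*(C ((4:ℂ)⁻¹))) * h01 + (4*(X 0)*(C ((4:ℂ)⁻¹))) * h10 + ((C m)*(q) + (C m)^2*(q) + (C b)*(q) + (C b)*(C m)*(q) + (C a)*(q) + (C a)*(C m)*(q)) * hk

lemma Zval (a b : ℂ) {q : MvPolynomial (Fin 2) ℂ} {m : ℂ}
    (h00 : X 0 * pderiv 0 q + X 1 * pderiv 1 q = C m * q) :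
    ZHahn a b q = XHahn (Fop a b (Eop q)) - Fop a b (Eop (XHahn q)) := by
  rw [ZHahn, Yval a b h00, Yval a b (eul_XHahn h00)]
  simp only [XHahn, map_add, pderiv_C_mul]
  ring



set_option maxHeartbeats 6000000 in
theorem hahn_relations_on_homogeneous (a b : ℂ) (N : ℕ) (hN : 0 < N)
    (p : MvPolynomial (Fin 2) ℂ) (hp : p.IsHomogeneous N) :
    (XHahn (ZHahn a b p) - ZHahn a b (XHahn p) =
      2 * XHahn (XHahn p) + C (a - b - 2 * (N : ℂ)) * XHahn p + YHahn a b p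
        - C (a * (N : ℂ)) * p) ∧
    (YHahn a b (ZHahn a b p) - ZHahn a b (YHahn a b p) =
      -2 * (XHahn (YHahn a b p) + YHahn a b (XHahn p))
        - C ((a + b) * (a + b - 2)) * XHahn p - C (a - b - 2 * (N : ℂ)) * YHahn a b p
        + C (a * (a + b - 2) * (N : ℂ)) * p) := by
  have h00 : X 0 * pderiv 0 p + X 1 * pderiv 1 p = C (N:ℂ) * p := euler_base hp
  have hXp := eul_XHahn h00
  have hYpE : X 0 * pderiv 0 (YHahn a b p) + X 1 * pderiv 1 (YHahn a b p)
      = C (N:ℂ) * YHahn a b p := by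
    rw [Yval a b h00]; exact eul_add (eul_Cmul h00) (eul_FE a b h00)
  have hZpE : X 0 * pderiv 0 (ZHahn a b p) + X 1 * pderiv 1 (ZHahn a b p)
      = C (N:ℂ) * ZHahn a b p := by
    rw [Zval a b h00]; exact eul_sub (eul_XHahn (eul_FE a b h00)) (eul_FE a b hXp)
  have h10 := euler_step0 h00
  have h01 := euler_step1 h00
  have h20 := euler_step0 h10
  have h11 := euler_step1 h10
  have h02 := euler_step1 h01
  simp only [pdswap] at h01 h11 h02
  simp only [map_sub, map_one] at h10 h01 h20 h11 h02
  constructor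
  · rw [Zval a b h00, Zval a b hXp, Yval a b h00]
    simp only [XHahn, Fop, Eop, map_add, map_sub, map_neg, pderiv_mul, pderiv_C_mul, pderiv_C,
      pd2, pderiv_X_self, pderiv_one, map_zero, pd01, pd10, pdswap, map_mul, map_ofNat, map_one]
    linear_combination (1 + (C (N:ℂ)) + (C b)) * h00 + ((X 1)) * h01 + (- (X 0)) * h10
  · rw [Yval a b hZpE, Zval a b hYpE, Zval a b h00, Yval a b hXp, Yval a b h00]
    simp only [XHahn, Fop, Eop, map_add, map_sub, map_neg, pderiv_mul, pderiv_C_mul, pderiv_C,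
      pd2, pderiv_X_self, pderiv_one, map_zero, pd01, pd10, pdswap, map_mul, map_ofNat, map_one]
    linear_combination (2*(C (N:ℂ)) + 2*(C (N:ℂ))^2 + (C b) + 3*(C b)*(C (N:ℂ)) + (C b)^2 - 3*(C a) + (C a)*(C (N:ℂ)) + (C a)*(C b)) * h00 + (2*(X 1)*(C (N:ℂ)) + (X 1)*(C b) + (X 1)*(C a) - 2*(X 0)*(C b)) * h01 + (- 2*(X 0)*(X 1)) * h02 + (- 2*(X 1)*(C a) - 8*(X 0) - 2*(X 0)*(C (N:ℂ)) - (X 0)*(C b) - 5*(X 0)*(C a)) * h10 + (- 2*(X 0)*(X 1) - 4*(X 0)^2) * h20
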